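/- Let (X, Σ, ν) be a finite measure space and let μ_n, μ be finite measures with densities g_n, g ∈ L¹(X, ν) respectively (dμ_n = g_n dν, dμ = g dν). Then μ_n(A) → μ(A) for every A ∈ Σ if and only if g_n ⇀ g weakly in L¹(X, ν). -/

import Mathlib

open MeasureTheory Filter Topology

/-- Uniform approximation of a bounded measurable function by a simple function. -/
lemma exists_simpleFunc_unif_approx {X : Type*} [MeasurableSpace X] {h : X → ℝ}
    (hm : Measurable h) (M : ℝ) (hb : ∀ x, |h x| ≤ M) {δ : ℝ} (hδ : 0 < δ) :
    ∃ φ : SimpleFunc X ℝ, ∀ x, |h x - φ x| ≤ δ := by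
  have hmeas : Measurable fun x => δ * ((⌊h x / δ⌋ : ℤ) : ℝ) :=
    measurable_const.mul ((measurable_from_top).comp (hm.div_const δ).floor)
  have hfin : (Set.range fun x => δ * ((⌊h x / δ⌋ : ℤ) : ℝ)).Finite := by
    apply Set.Finite.subset (((Set.finite_Icc (⌊-M / δ⌋) ⌊M / δ⌋).image
      (fun j : ℤ => δ * (j : ℝ))))
    rintro - ⟨x, rfl⟩
    refine ⟨⌊h x / δ⌋, ⟨?_, ?_⟩, rfl⟩
    · exact Int.floor_le_floor (by
        have h1 := (abs_le.1 (hb x)).1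
        exact div_le_div_of_nonneg_right h1 hδ.le)
    · exact Int.floor_le_floor (div_le_div_of_nonneg_right (abs_le.1 (hb x)).2 hδ.le)
  refine ⟨⟨fun x => δ * ((⌊h x / δ⌋ : ℤ) : ℝ),
      fun y => hmeas (measurableSet_singleton y), hfin⟩, fun x => ?_⟩
  have h1 : ((⌊h x / δ⌋ : ℤ) : ℝ) ≤ h x / δ := Int.floor_le _
  have h2 : h x / δ < (⌊h x / δ⌋ : ℤ) + 1 := Int.lt_floor_add_one _
  have hδ' : δ ≠ 0 := ne_of_gt hδ
  have hx : h x = δ * (h x / δ) := by field_simp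
  simp only [SimpleFunc.coe_mk]
  rw [abs_le]
  constructor <;> nlinarith [mul_le_mul_of_nonneg_left h1 hδ.le,
    mul_lt_mul_of_pos_left h2 hδ]

/-- For finite measures `μ_n = g_n dν`, `μ = g dν` with integrable
nonnegative densities, setwise convergence `μ_n A → μ A` for every measurable `A` is
equivalent to weak `L¹(ν)` convergence of the densities, i.e. `∫ g_n h dν → ∫ g h dν`
for every bounded measurable `h`. -/
theorem setwise_convergence_iff_weakL1_of_densities
    {X : Type*} [MeasurableSpace X] (ν : Measure X) [IsFiniteMeasure ν]
    (g : ℕ → X → ℝ) (g₀ : X → ℝ)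
    (hgm : ∀ n, Measurable (g n)) (hg₀m : Measurable g₀)
    (hgpos : ∀ n x, 0 ≤ g n x) (hg₀pos : ∀ x, 0 ≤ g₀ x)
    (hgi : ∀ n, Integrable (g n) ν) (hg₀i : Integrable g₀ ν) :
    (∀ A : Set X, MeasurableSet A →
        Tendsto (fun n => ν.withDensity (fun x => ENNReal.ofReal (g n x)) A) atTop
          (nhds (ν.withDensity (fun x => ENNReal.ofReal (g₀ x)) A)))
    ↔ (∀ h : X → ℝ, Measurable h → (∃ M : ℝ, ∀ x, |h x| ≤ M) →
        Tendsto (fun n => ∫ x, g n x * h x ∂ν) atTop (nhds (∫ x, g₀ x * h x ∂ν))) := by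
  -- withDensity values as ofReal of set integrals
  have key : ∀ (f : X → ℝ), Integrable f ν → (∀ x, 0 ≤ f x) → ∀ A : Set X, MeasurableSet A →
      ν.withDensity (fun x => ENNReal.ofReal (f x)) A = ENNReal.ofReal (∫ x in A, f x ∂ν) := by
    intro f hfi hpos A hA
    rw [withDensity_apply _ hA, ofReal_integral_eq_lintegral_ofReal hfi.integrableOn
      (Filter.Eventually.of_forall fun x => hpos x)]
  -- the setwise hypothesis in real form
  have realform : (∀ A : Set X, MeasurableSet A →
      Tendsto (fun n => ν.withDensity (fun x => ENNReal.ofReal (g n x)) A) atTop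
        (nhds (ν.withDensity (fun x => ENNReal.ofReal (g₀ x)) A))) ↔
      (∀ A : Set X, MeasurableSet A →
        Tendsto (fun n => ∫ x in A, g n x ∂ν) atTop (nhds (∫ x in A, g₀ x ∂ν))) := by
    constructor
    · intro H A hA
      have := H A hA
      rw [key _ hg₀i hg₀pos A hA] at this
      simp_rw [fun n => key (g n) (hgi n) (hgpos n) A hA] at this
      have h2 : Tendsto (fun n => (ENNReal.ofReal (∫ x in A, g n x ∂ν)).toReal) atTop
          (nhds ((ENNReal.ofReal (∫ x in A, g₀ x ∂ν)).toReal)) :=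
        (ENNReal.tendsto_toReal ENNReal.ofReal_ne_top).comp this
      rw [ENNReal.toReal_ofReal (integral_nonneg fun x => hg₀pos x)] at h2
      exact h2.congr fun n => ENNReal.toReal_ofReal
        (integral_nonneg (μ := ν.restrict A) fun x => hgpos n x)
    · intro H A hA
      rw [key _ hg₀i hg₀pos A hA]
      simp_rw [fun n => key (g n) (hgi n) (hgpos n) A hA]
      exact (ENNReal.continuous_ofReal.continuousAt.tendsto).comp (H A hA)
  rw [realform]
  constructor
  · intro H h hm ⟨M, hM⟩
    -- integrability helper
    have intmul : ∀ (f : X → ℝ), AEStronglyMeasurable f ν → (∃ C, ∀ x, ‖f x‖ ≤ C) →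
        ∀ n : ℕ ⊕ Unit, Integrable
          (fun x => (Sum.elim g (fun _ => g₀) n) x * f x) ν := by
      intro f hf hC n
      have : Integrable (fun x => f x * (Sum.elim g (fun _ => g₀) n) x) ν := by
        cases n with
        | inl n => exact (hgi n).bdd_mul hf (Filter.Eventually.of_forall hC.choose_spec)
        | inr _ => exact hg₀i.bdd_mul hf (Filter.Eventually.of_forall hC.choose_spec)
      simpa [mul_comm] using this
    -- tendsto for simple functions
    have simple : ∀ φ : SimpleFunc X ℝ,
        Tendsto (fun n => ∫ x, g n x * φ x ∂ν) atTop (nhds (∫ x, g₀ x * φ x ∂ν)) := by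
      intro φ
      induction φ using SimpleFunc.induction with
      | const c hs =>
        rename_i s
        have hrw : ∀ (f : X → ℝ), (∫ x, f x * (SimpleFunc.piecewise s hs
            (SimpleFunc.const X c) (SimpleFunc.const X 0)) x ∂ν)
            = (∫ x in s, f x ∂ν) * c := by
          intro f
          have : (fun x => f x * (SimpleFunc.piecewise s hs
              (SimpleFunc.const X c) (SimpleFunc.const X 0)) x)
              = Set.indicator s (fun x => f x * c) := by
            funext x
            by_cases hx : x ∈ s <;>
              simp [SimpleFunc.piecewise_apply, hx, Set.indicator_apply]
          rw [this, integral_indicator hs, integral_mul_const]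
        simp_rw [hrw]
        exact (H s hs).mul_const c
      | add hdisj hφ hψ =>
        rename_i φ ψ
        have hrw : ∀ n : ℕ ⊕ Unit, (∫ x, (Sum.elim g (fun _ => g₀) n) x * (φ + ψ) x ∂ν)
            = (∫ x, (Sum.elim g (fun _ => g₀) n) x * φ x ∂ν)
              + (∫ x, (Sum.elim g (fun _ => g₀) n) x * ψ x ∂ν) := by
          intro n
          rw [← integral_add (intmul φ φ.measurable.aestronglyMeasurable
              φ.exists_forall_norm_le n)
            (intmul ψ ψ.measurable.aestronglyMeasurable ψ.exists_forall_norm_le n)]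
          simp [mul_add]
        have h1 : ∀ n : ℕ, (∫ x, g n x * (φ + ψ) x ∂ν)
            = (∫ x, g n x * φ x ∂ν) + (∫ x, g n x * ψ x ∂ν) := fun n => hrw (Sum.inl n)
        have h0 := hrw (Sum.inr ())
        simp only [Sum.elim_inr] at h0
        simp_rw [h1, h0]
        exact hφ.add hψ
    -- main ε-argument
    have hBnn : (0:ℝ) ≤ ∫ x, g₀ x ∂ν := integral_nonneg fun x => hg₀pos x
    set B := ∫ x, g₀ x ∂ν with hB
    have htot : Tendsto (fun n => ∫ x, g n x ∂ν) atTop (nhds B) := by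
      have := H Set.univ MeasurableSet.univ
      simpa using this
    have hev : ∀ᶠ n in atTop, ∫ x, g n x ∂ν ≤ B + 1 :=
      (htot.eventually (eventually_le_nhds (by linarith))).mono fun n hn => hn
    rw [Metric.tendsto_atTop]
    intro ε hε
    set δ := ε / (2 * (2 * B + 3)) with hδdef
    have hδ : 0 < δ := by positivity
    obtain ⟨φ, hφ⟩ := exists_simpleFunc_unif_approx hm M hM hδ
    obtain ⟨C, hC⟩ := φ.exists_forall_norm_le
    -- the difference h - φ is bounded
    have hdiffb : ∃ C', ∀ x, ‖h x - φ x‖ ≤ C' := ⟨δ, fun x => hφ x⟩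
    have hintφ := fun n => intmul φ φ.measurable.aestronglyMeasurable
      φ.exists_forall_norm_le n
    have hinth := fun n => intmul h hm.aestronglyMeasurable ⟨M, hM⟩ n
    -- error bound for each weight f ∈ {g n, g₀}
    have err : ∀ n : ℕ ⊕ Unit,
        |(∫ x, (Sum.elim g (fun _ => g₀) n) x * h x ∂ν)
          - (∫ x, (Sum.elim g (fun _ => g₀) n) x * φ x ∂ν)|
        ≤ δ * ∫ x, (Sum.elim g (fun _ => g₀) n) x ∂ν := by
      intro n
      set f := Sum.elim g (fun _ => g₀) n with hf
      have hfint : Integrable f ν := by cases n with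
        | inl n => exact hgi n
        | inr _ => exact hg₀i
      have hfpos : ∀ x, 0 ≤ f x := by cases n with
        | inl n => exact hgpos n
        | inr _ => exact hg₀pos
      rw [← integral_sub (hinth n) (hintφ n), ← Real.norm_eq_abs]
      have hb : ∀ x, ‖f x * h x - f x * φ x‖ ≤ δ * f x := by
        intro x
        rw [← mul_sub]
        rw [norm_mul]
        rw [Real.norm_of_nonneg (hfpos x)]
        calc f x * ‖h x - φ x‖ ≤ f x * δ :=
              mul_le_mul_of_nonneg_left (hφ x) (hfpos x)
          _ = δ * f x := mul_comm _ _
      calc ‖∫ x, (f x * h x - f x * φ x) ∂ν‖ ≤ ∫ x, δ * f x ∂ν := by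
            refine (norm_integral_le_of_norm_le (hfint.const_mul δ) ?_)
            exact Filter.Eventually.of_forall hb
        _ = δ * ∫ x, f x ∂ν := integral_const_mul δ _
    have errn : ∀ n : ℕ, |(∫ x, g n x * h x ∂ν) - (∫ x, g n x * φ x ∂ν)|
        ≤ δ * ∫ x, g n x ∂ν := fun n => err (Sum.inl n)
    have err0 : |(∫ x, g₀ x * h x ∂ν) - (∫ x, g₀ x * φ x ∂ν)| ≤ δ * B := by
      have := err (Sum.inr ()); simpa using this
    have hφconv := simple φ
    rw [Metric.tendsto_atTop] at hφconv
    obtain ⟨N1, hN1⟩ := hφconv (ε / 2) (by positivity)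
    obtain ⟨N2, hN2⟩ := (eventually_atTop.1 hev)
    refine ⟨max N1 N2, fun n hn => ?_⟩
    have hn1 := hN1 n (le_trans (le_max_left _ _) hn)
    have hn2 := hN2 n (le_trans (le_max_right _ _) hn)
    rw [Real.dist_eq] at hn1 ⊢
    have tri : |(∫ x, g n x * h x ∂ν) - (∫ x, g₀ x * h x ∂ν)|
        ≤ |(∫ x, g n x * h x ∂ν) - (∫ x, g n x * φ x ∂ν)|
          + |(∫ x, g n x * φ x ∂ν) - (∫ x, g₀ x * φ x ∂ν)|
          + |(∫ x, g₀ x * φ x ∂ν) - (∫ x, g₀ x * h x ∂ν)| := by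
      have := abs_sub_le (∫ x, g n x * h x ∂ν) (∫ x, g n x * φ x ∂ν) (∫ x, g₀ x * h x ∂ν)
      have := abs_sub_le (∫ x, g n x * φ x ∂ν) (∫ x, g₀ x * φ x ∂ν) (∫ x, g₀ x * h x ∂ν)
      linarith [abs_sub_le (∫ x, g n x * h x ∂ν) (∫ x, g n x * φ x ∂ν) (∫ x, g₀ x * h x ∂ν),
        abs_sub_le (∫ x, g n x * φ x ∂ν) (∫ x, g₀ x * φ x ∂ν) (∫ x, g₀ x * h x ∂ν)]
    have e1 := errn n
    have e3 : |(∫ x, g₀ x * φ x ∂ν) - (∫ x, g₀ x * h x ∂ν)| ≤ δ * B := by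
      rw [abs_sub_comm]; exact err0
    have hδmul : δ * (∫ x, g n x ∂ν) ≤ δ * (B + 1) :=
      mul_le_mul_of_nonneg_left hn2 hδ.le
    have hkey : δ * (2 * B + 3) = ε / 2 := by
      rw [hδdef]; field_simp
    calc |(∫ x, g n x * h x ∂ν) - (∫ x, g₀ x * h x ∂ν)|
        ≤ δ * (∫ x, g n x ∂ν) + (ε / 2) + δ * B := by linarith
      _ ≤ δ * (B + 1) + ε / 2 + δ * B := by linarith
      _ < ε := by nlinarith
  · intro H A hA
    have hmeas : Measurable (A.indicator (fun _ => (1:ℝ))) :=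
      measurable_const.indicator hA
    have hbd : ∀ x, |A.indicator (fun _ => (1:ℝ)) x| ≤ 1 := by
      intro x; by_cases hx : x ∈ A <;> simp [Set.indicator_apply, hx]
    have := H _ hmeas ⟨1, hbd⟩
    have hrw : ∀ (f : X → ℝ), (∫ x, f x * A.indicator (fun _ => (1:ℝ)) x ∂ν)
        = ∫ x in A, f x ∂ν := by
      intro f
      have : (fun x => f x * A.indicator (fun _ => (1:ℝ)) x) = A.indicator f := by
        funext x; by_cases hx : x ∈ A <;> simp [Set.indicator_apply, hx]
      rw [this, integral_indicator hA]
    simp_rw [hrw] at this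
    exact this
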